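/- Let Ω = {ω_1, …, ω_6} and let 𝓘 = { {ω_1, ω_2, ω_3}, {ω_3, ω_4, ω_5}, {ω_5, ω_6, ω_1} }. If P is a partition of Ω into exactly 3 nonempty blocks satisfying the 𝒥-minimal compatibility condition with respect to 𝓘, then P is one of the following four partitions: {{ω_1, ω_2, ω_3}, {ω_4, ω_6}, {ω_5}}; {{ω_3, ω_4, ω_5}, {ω_2, ω_6}, {ω_1}}; {{ω_5, ω_6, ω_1}, {ω_2, ω_4}, {ω_3}}; {{ω_2, ω_5}, {ω_4, ω_1}, {ω_6, ω_3}}. -/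
import Mathlib


/-- `P` is a partition of `Ω` into exactly `r` nonempty pairwise disjoint blocks
whose union is `Ω`. -/
def isPartitionInto {Ω : Type*} [Fintype Ω] [DecidableEq Ω]
    (P : Finset (Finset Ω)) (r : ℕ) : Prop :=
  P.card = r ∧ (∀ B ∈ P, B.Nonempty) ∧
    (∀ B ∈ P, ∀ C ∈ P, B ≠ C → Disjoint B C) ∧ P.biUnion id = Finset.univ

/-- The 𝒥-minimal compatibility condition: every member `S` of `I` is either contained
in a single block of `P`, or its elements lie in pairwise distinct blocks of `P`. -/
def JCompat {Ω : Type*} [DecidableEq Ω] (P : Finset (Finset Ω))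
    (I : Finset (Finset Ω)) : Prop :=
  ∀ S ∈ I, (∃ B ∈ P, S ⊆ B) ∨
    (∀ x ∈ S, ∀ y ∈ S, ∀ B ∈ P, x ∈ B → y ∈ B → x = y)

set_option maxHeartbeats 8000000 in
set_option maxRecDepth 100000 in
set_option synthInstance.maxSize 5000 in
set_option synthInstance.maxHeartbeats 2000000 in
lemma key5 : ∀ a b c d x y : Fin 3,
    (∀ v : Fin 3, v = a ∨ v = b ∨ v = c ∨ v = d ∨ v = x ∨ v = y) →
    ((a = b ∧ b = c) ∨ (a ≠ b ∧ a ≠ c ∧ b ≠ c)) →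
    ((c = d ∧ d = x) ∨ (c ≠ d ∧ c ≠ x ∧ d ≠ x)) →
    ((x = y ∧ y = a) ∨ (x ≠ y ∧ x ≠ a ∧ y ≠ a)) →
    (Finset.image (fun i => Finset.univ.filter fun j => ![a,b,c,d,x,y] j = ![a,b,c,d,x,y] i) Finset.univ
      = ({{0,1,2},{3,5},{4}} : Finset (Finset (Fin 6))) ∨
     Finset.image (fun i => Finset.univ.filter fun j => ![a,b,c,d,x,y] j = ![a,b,c,d,x,y] i) Finset.univ
      = ({{2,3,4},{1,5},{0}} : Finset (Finset (Fin 6))) ∨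
     Finset.image (fun i => Finset.univ.filter fun j => ![a,b,c,d,x,y] j = ![a,b,c,d,x,y] i) Finset.univ
      = ({{4,5,0},{1,3},{2}} : Finset (Finset (Fin 6))) ∨
     Finset.image (fun i => Finset.univ.filter fun j => ![a,b,c,d,x,y] j = ![a,b,c,d,x,y] i) Finset.univ
      = ({{1,4},{3,0},{5,2}} : Finset (Finset (Fin 6)))) := by decide

/- Here `Ω = Fin 6`, with `ω_i` corresponding to `i - 1 : Fin 6`. -/
theorem stmt5 (P : Finset (Finset (Fin 6)))
    (hP : isPartitionInto P 3)
    (hcompat : JCompat P ({{0,1,2},{2,3,4},{4,5,0}} : Finset (Finset (Fin 6)))) :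
    P = {{0,1,2},{3,5},{4}} ∨ P = {{2,3,4},{1,5},{0}} ∨
    P = {{4,5,0},{1,3},{2}} ∨ P = {{1,4},{3,0},{5,2}} := by
  obtain ⟨hcard, hne, hdisj, hunion⟩ := hP
  have hex : ∀ i : Fin 6, ∃ B ∈ P, i ∈ B := by
    intro i
    have : i ∈ P.biUnion id := hunion ▸ Finset.mem_univ i
    simpa using this
  choose f hfP hfi using hex
  have huniq : ∀ B ∈ P, ∀ i, i ∈ B → B = f i := by
    intro B hB i hiB
    by_contra h
    exact (Finset.disjoint_left.mp (hdisj B hB (f i) (hfP i) h)) hiB (hfi i)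
  have eqv : {x // x ∈ P} ≃ Fin 3 := P.equivFin.trans (finCongr hcard)
  set e : Fin 6 → Fin 3 := fun i => eqv ⟨f i, hfP i⟩ with he
  have hfe : ∀ i j : Fin 6, e j = e i ↔ f j = f i := by
    intro i j
    constructor
    · intro h
      exact congrArg Subtype.val (eqv.injective h)
    · intro h
      exact congrArg eqv (Subtype.ext h)
  have hmemf : ∀ i j, j ∈ f i ↔ e j = e i := by
    intro i j
    rw [hfe]
    constructor
    · intro hj
      exact (huniq (f i) (hfP i) j hj).symm
    · intro h
      rw [← h]; exact hfi j
  -- surjectivity of e onto Fin 3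
  have hsurj' : ∀ v : Fin 3, ∃ x : Fin 6, e x = v := by
    intro v
    obtain ⟨⟨B, hB⟩, hv⟩ : ∃ b : {x // x ∈ P}, eqv b = v := ⟨eqv.symm v, eqv.apply_symm_apply v⟩
    obtain ⟨x, hx⟩ := hne B hB
    refine ⟨x, ?_⟩
    have hfx : f x = B := (huniq B hB x hx).symm
    have : eqv ⟨f x, hfP x⟩ = eqv ⟨B, hB⟩ := congrArg eqv (Subtype.ext hfx)
    rw [he]
    simp only [this]
    exact hv
  have hsurj : ∀ v : Fin 3, v = e 0 ∨ v = e 1 ∨ v = e 2 ∨ v = e 3 ∨ v = e 4 ∨ v = e 5 := by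
    intro v
    obtain ⟨x, hx⟩ := hsurj' v
    subst hx
    fin_cases x
    · exact Or.inl rfl
    · exact Or.inr (Or.inl rfl)
    · exact Or.inr (Or.inr (Or.inl rfl))
    · exact Or.inr (Or.inr (Or.inr (Or.inl rfl)))
    · exact Or.inr (Or.inr (Or.inr (Or.inr (Or.inl rfl))))
    · exact Or.inr (Or.inr (Or.inr (Or.inr (Or.inr rfl))))
  -- translate compatibility for each triple
  have tri : ∀ p q r : Fin 6, ({p, q, r} : Finset (Fin 6)) ∈
        ({{0,1,2},{2,3,4},{4,5,0}} : Finset (Finset (Fin 6))) →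
      p ≠ q → p ≠ r → q ≠ r →
      ((e p = e q ∧ e q = e r) ∨ (e p ≠ e q ∧ e p ≠ e r ∧ e q ≠ e r)) := by
    intro p q r hS hpq hpr hqr
    have hp : p ∈ ({p, q, r} : Finset (Fin 6)) := by simp
    have hq : q ∈ ({p, q, r} : Finset (Fin 6)) := by simp
    have hr : r ∈ ({p, q, r} : Finset (Fin 6)) := by simp
    rcases hcompat _ hS with ⟨B, hB, hSB⟩ | hdist
    · left
      have hBp := huniq B hB p (hSB hp)
      have hBq := huniq B hB q (hSB hq)
      have hBr := huniq B hB r (hSB hr)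
      constructor
      · exact ((hfe p q).mpr (by rw [← hBq, ← hBp])).symm
      · exact ((hfe q r).mpr (by rw [← hBr, ← hBq])).symm
    · right
      refine ⟨fun h => hpq ?_, fun h => hpr ?_, fun h => hqr ?_⟩
      · exact hdist p hp q hq (f p) (hfP p) (hfi p) ((hmemf p q).mpr h.symm)
      · exact hdist p hp r hr (f p) (hfP p) (hfi p) ((hmemf p r).mpr h.symm)
      · exact hdist q hq r hr (f q) (hfP q) (hfi q) ((hmemf q r).mpr h.symm)
  have h1 := tri 0 1 2 (by decide) (by decide) (by decide) (by decide)
  have h2 := tri 2 3 4 (by decide) (by decide) (by decide) (by decide)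
  have h3 := tri 4 5 0 (by decide) (by decide) (by decide) (by decide)
  have hE : ∀ i : Fin 6, ![e 0, e 1, e 2, e 3, e 4, e 5] i = e i := by
    intro i; fin_cases i <;> rfl
  have hPim : P = Finset.image (fun i => Finset.univ.filter fun j => e j = e i) Finset.univ := by
    have hblock : ∀ i, f i = Finset.univ.filter fun j => e j = e i := by
      intro i; ext j; simp [hmemf i j]
    ext B
    simp only [Finset.mem_image, Finset.mem_univ, true_and]
    constructor
    · intro hB
      obtain ⟨x, hx⟩ := hne B hB
      exact ⟨x, by rw [← hblock x, ← huniq B hB x hx]⟩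
    · rintro ⟨i, rfl⟩
      rw [← hblock i]
      exact hfP i
  have himg : (Finset.image (fun i => Finset.univ.filter fun j =>
        ![e 0, e 1, e 2, e 3, e 4, e 5] j = ![e 0, e 1, e 2, e 3, e 4, e 5] i) Finset.univ)
      = Finset.image (fun i => Finset.univ.filter fun j => e j = e i) Finset.univ := by
    apply Finset.image_congr
    intro i _
    ext j
    simp [hE]
  rcases key5 (e 0) (e 1) (e 2) (e 3) (e 4) (e 5) hsurj h1 h2 h3 with h | h | h | h <;>
    rw [himg, ← hPim] at h
  · exact Or.inl h
  · exact Or.inr (Or.inl h)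
  · exact Or.inr (Or.inr (Or.inl h))
  · exact Or.inr (Or.inr (Or.inr h))
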